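/- Let π_1, π_2, π_3 be three strings, each a permutation of a finite alphabet Σ with |Σ| = m. Then |lcs(π_1, π_2)| · |lcs(π_2, π_3)| · |lcs(π_3, π_1)| ≥ m. -/

import Mathlib

/-- `lcsLen u v` is the length of a longest common subsequence of the strings
(lists) `u` and `v`: the maximum length of a list that is a sublist
(not necessarily contiguous subsequence) of both `u` and `v`. -/
def lcsLen {α : Type*} [DecidableEq α] (u v : List α) : ℕ :=
  ((u.sublists.filter (fun t => decide (t.Sublist v))).map List.length).foldr max 0

private lemma le_foldr_max {l : List ℕ} {x : ℕ} (h : x ∈ l) : x ≤ l.foldr max 0 := by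
  induction l with
  | nil => cases h
  | cons a t ih =>
    rcases List.mem_cons.1 h with rfl | h
    · exact le_max_left _ _
    · exact le_trans (ih h) (le_max_right _ _)

private lemma foldr_max_mem {l : List ℕ} (h : l ≠ []) : l.foldr max 0 ∈ l := by
  induction l with
  | nil => simp at h
  | cons a t ih =>
    rcases eq_or_ne t [] with rfl | ht
    · simp
    · rcases max_cases a (t.foldr max 0) with ⟨he, _⟩ | ⟨he, _⟩
      · simp [List.foldr_cons, he]
      · refine List.mem_cons.2 (Or.inr ?_)
        have := ih ht
        simpa [List.foldr_cons, he] using this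

private lemma le_lcsLen {α : Type*} [DecidableEq α] {u v t : List α}
    (hu : t.Sublist u) (hv : t.Sublist v) : t.length ≤ lcsLen u v := by
  apply le_foldr_max
  exact List.mem_map.2 ⟨t, List.mem_filter.2 ⟨List.mem_sublists.2 hu, by simpa using hv⟩, rfl⟩

private lemma exists_lcs {α : Type*} [DecidableEq α] (u v : List α) :
    ∃ t : List α, t.Sublist u ∧ t.Sublist v ∧ t.length = lcsLen u v := by
  set l := (u.sublists.filter (fun t => decide (t.Sublist v))).map List.length with hl
  have h0 : (0 : ℕ) ∈ l :=
    List.mem_map.2 ⟨[], List.mem_filter.2 ⟨List.mem_sublists.2 (List.nil_sublist u),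
      by simpa using List.nil_sublist v⟩, rfl⟩
  have hne : l ≠ [] := List.ne_nil_of_mem h0
  obtain ⟨t, ht, hlen⟩ := List.mem_map.1 (foldr_max_mem hne)
  have h1 := List.mem_filter.1 ht
  exact ⟨t, List.mem_sublists.1 h1.1, by simpa using h1.2, hlen⟩

/-- The prefix of `u` up to and including `x`. -/
private def pfx {α : Type*} [DecidableEq α] (u : List α) (x : α) : List α :=
  u.take (u.idxOf x + 1)

private lemma pfx_sublist {α : Type*} [DecidableEq α] (u : List α) (x : α) :
    (pfx u x).Sublist u := List.take_sublist _ _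

private lemma mem_pfx {α : Type*} [DecidableEq α] {u : List α} {x : α} (hx : x ∈ u) :
    x ∈ pfx u x := by
  have h : u.idxOf x < u.length := List.idxOf_lt_length_iff.2 hx
  have : u.take (u.idxOf x) ++ [u[u.idxOf x]] = u.take (u.idxOf x + 1) :=
    List.take_concat_get' u _ h
  rw [pfx, ← this, List.getElem_idxOf h]
  simp

private lemma pfx_append_sublist {α : Type*} [DecidableEq α] {u : List α} {x y : α}
    (hy : y ∈ u) (hxy : u.idxOf x < u.idxOf y) {t : List α}
    (ht : t.Sublist (pfx u x)) : (t ++ [y]).Sublist (pfx u y) := by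
  have hylt : u.idxOf y < u.length := List.idxOf_lt_length_iff.2 hy
  have h1 : (pfx u x).Sublist (u.take (u.idxOf y)) := by
    have : pfx u x = (u.take (u.idxOf y)).take (u.idxOf x + 1) := by
      rw [pfx, List.take_take, min_eq_left hxy]
    rw [this]
    exact List.take_sublist _ _
  have h2 : u.take (u.idxOf y) ++ [y] = pfx u y := by
    have := List.take_concat_get' u _ hylt
    rwa [List.getElem_idxOf hylt] at this
  rw [← h2]
  exact (ht.trans h1).append (List.Sublist.refl [y])

/-- `f u v x` : length of an LCS of the prefixes of `u` and `v` up to `x`. -/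
private def flcs {α : Type*} [DecidableEq α] (u v : List α) (x : α) : ℕ :=
  lcsLen (pfx u x) (pfx v x)

private lemma one_le_flcs {α : Type*} [DecidableEq α] {u v : List α} {x : α}
    (hu : x ∈ u) (hv : x ∈ v) : 1 ≤ flcs u v x := by
  have := le_lcsLen (t := [x]) (List.singleton_sublist.2 (mem_pfx hu))
    (List.singleton_sublist.2 (mem_pfx hv))
  simpa [flcs] using this

private lemma flcs_le {α : Type*} [DecidableEq α] (u v : List α) (x : α) :
    flcs u v x ≤ lcsLen u v := by
  obtain ⟨t, htu, htv, hlen⟩ := exists_lcs (pfx u x) (pfx v x)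
  rw [flcs, ← hlen]
  exact le_lcsLen (htu.trans (pfx_sublist u x)) (htv.trans (pfx_sublist v x))

private lemma flcs_lt_flcs {α : Type*} [DecidableEq α] {u v : List α} {x y : α}
    (hyu : y ∈ u) (hyv : y ∈ v)
    (hu : u.idxOf x < u.idxOf y) (hv : v.idxOf x < v.idxOf y) :
    flcs u v x < flcs u v y := by
  obtain ⟨t, htu, htv, hlen⟩ := exists_lcs (pfx u x) (pfx v x)
  have h1 := pfx_append_sublist hyu hu htu
  have h2 := pfx_append_sublist hyv hv htv
  have hle := le_lcsLen h1 h2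
  simp only [List.length_append, List.length_singleton, hlen] at hle
  simp only [flcs]
  omega

/-- If the prefix-lcs values agree at two distinct points, their relative orders
in `u` and `v` must differ. -/
private lemma order_ne_of_flcs_eq {α : Type*} [DecidableEq α] {u v : List α} {x y : α}
    (hxu : x ∈ u) (hxv : x ∈ v) (hyu : y ∈ u) (hyv : y ∈ v) (hxy : x ≠ y)
    (h : flcs u v x = flcs u v y) :
    ¬ (u.idxOf x < u.idxOf y ↔ v.idxOf x < v.idxOf y) := by
  have hu : u.idxOf x ≠ u.idxOf y := fun hc => hxy ((List.idxOf_inj hxu).1 hc)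
  have hv : v.idxOf x ≠ v.idxOf y := fun hc => hxy ((List.idxOf_inj hxv).1 hc)
  intro hiff
  rcases lt_or_gt_of_ne hu with h1 | h1
  · exact absurd h (Nat.ne_of_lt (flcs_lt_flcs hyu hyv h1 (hiff.1 h1)))
  · have h2 : v.idxOf y < v.idxOf x := by
      rcases lt_or_gt_of_ne hv with h2 | h2
      · exact absurd h1 (not_lt.2 (le_of_lt (by exact absurd (hiff.2 h2) (not_lt.2 (le_of_lt h1)))))
      · exact h2
    exact absurd h.symm (Nat.ne_of_lt (flcs_lt_flcs hxu hxv h1 h2))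

/-- **Lemma 10.** Let `π₁, π₂, π₃` be three strings, each a permutation
of a finite alphabet `Σ` with `|Σ| = m`. Then
`|lcs(π₁, π₂)| · |lcs(π₂, π₃)| · |lcs(π₃, π₁)| ≥ m`. -/
theorem lcs_triple_product_ge {α : Type*} [Fintype α] [DecidableEq α]
    (m : ℕ) (hm : Fintype.card α = m)
    (π₁ π₂ π₃ : List α)
    (h₁nd : π₁.Nodup) (h₁all : ∀ c : α, c ∈ π₁)
    (h₂nd : π₂.Nodup) (h₂all : ∀ c : α, c ∈ π₂)
    (h₃nd : π₃.Nodup) (h₃all : ∀ c : α, c ∈ π₃) :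
    m ≤ lcsLen π₁ π₂ * lcsLen π₂ π₃ * lcsLen π₃ π₁ := by
  set a := lcsLen π₁ π₂ with ha
  set b := lcsLen π₂ π₃ with hb
  set c := lcsLen π₃ π₁ with hc
  have hFa : ∀ x : α, flcs π₁ π₂ x - 1 < a := fun x => by
    have h1 := one_le_flcs (h₁all x) (h₂all x)
    have h2 := flcs_le π₁ π₂ x
    omega
  have hFb : ∀ x : α, flcs π₂ π₃ x - 1 < b := fun x => by
    have h1 := one_le_flcs (h₂all x) (h₃all x)
    have h2 := flcs_le π₂ π₃ x
    omega
  have hFc : ∀ x : α, flcs π₃ π₁ x - 1 < c := fun x => by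
    have h1 := one_le_flcs (h₃all x) (h₁all x)
    have h2 := flcs_le π₃ π₁ x
    omega
  let G : α → Fin a × Fin b × Fin c := fun x =>
    (⟨flcs π₁ π₂ x - 1, hFa x⟩, ⟨flcs π₂ π₃ x - 1, hFb x⟩, ⟨flcs π₃ π₁ x - 1, hFc x⟩)
  have hGinj : Function.Injective G := by
    intro x y hG
    by_contra hxy
    simp only [G, Prod.mk.injEq, Fin.mk.injEq] at hG
    obtain ⟨e1, e2, e3⟩ := hG
    have f1 : flcs π₁ π₂ x = flcs π₁ π₂ y := by
      have := one_le_flcs (h₁all x) (h₂all x)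
      have := one_le_flcs (h₁all y) (h₂all y)
      omega
    have f2 : flcs π₂ π₃ x = flcs π₂ π₃ y := by
      have := one_le_flcs (h₂all x) (h₃all x)
      have := one_le_flcs (h₂all y) (h₃all y)
      omega
    have f3 : flcs π₃ π₁ x = flcs π₃ π₁ y := by
      have := one_le_flcs (h₃all x) (h₁all x)
      have := one_le_flcs (h₃all y) (h₁all y)
      omega
    have o1 := order_ne_of_flcs_eq (h₁all x) (h₂all x) (h₁all y) (h₂all y) hxy f1
    have o2 := order_ne_of_flcs_eq (h₂all x) (h₃all x) (h₂all y) (h₃all y) hxy f2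
    have o3 := order_ne_of_flcs_eq (h₃all x) (h₁all x) (h₃all y) (h₁all y) hxy f3
    tauto
  have := Fintype.card_le_of_injective G hGinj
  simpa [hm, mul_assoc] using this
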